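/- Let Θ be a nondegenerate symmetric d-multilinear form on an n-dimensional k-vector space V. Then (V,Θ) is diagonalizable, i.e. there exists a basis β₁, …, βₙ of V with Θ(β_{j₁}, …, β_{j_d}) = 0 unless j₁ = ⋯ = j_d, if and only if the center Z(V,Θ) is isomorphic as a k-algebra to the product k × ⋯ × k of n copies of k. -/

import Mathlib

open Function

/-- Let `Θ` be a nondegenerate symmetric `d`-multilinear form on an
`n`-dimensional `k`-vector space `V`. Then `(V,Θ)` is diagonalizable (there is a basis
`β₁, …, βₙ` of `V` with `Θ(β_{j₁}, …, β_{j_d}) = 0` unless `j₁ = ⋯ = j_d`) iff the center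
`Z(V,Θ)` is isomorphic as a `k`-algebra to `k × ⋯ × k` (`n` copies), i.e. there is a
bijection from `Z(V,Θ)` onto `kⁿ` preserving addition, scalar multiplication,
multiplication (composition) and the identity. -/
theorem stmt_9 {k V : Type*} [Field k] [AddCommGroup V] [Module k V]
    [FiniteDimensional k V] {d n : ℕ} (hd : 3 ≤ d)
    (hchar : CharZero k ∨ ∃ p : ℕ, CharP k p ∧ d < p)
    (hn : Module.finrank k V = n)
    (Θ : MultilinearMap k (fun _ : Fin d => V) k)
    (hsymm : ∀ (σ : Equiv.Perm (Fin d)) (v : Fin d → V), Θ (v ∘ σ) = Θ v)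
    (hnd : ∀ u : V,
      (∀ v : Fin d → V, Θ (Function.update v ⟨0, by omega⟩ u) = 0) → u = 0) :
    let i0 : Fin d := ⟨0, by omega⟩
    let i1 : Fin d := ⟨1, by omega⟩
    let Z : Set (Module.End k V) := {φ | ∀ v : Fin d → V,
      Θ (Function.update v i0 (φ (v i0))) = Θ (Function.update v i1 (φ (v i1)))}
    (∃ β : Module.Basis (Fin n) k V, ∀ j : Fin d → Fin n,
        (¬ ∀ s s' : Fin d, j s = j s') → Θ (fun s => β (j s)) = 0)
      ↔ (∃ F : Module.End k V → (Fin n → k),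
          Set.BijOn F Z Set.univ ∧
          (∀ φ ∈ Z, ∀ ψ ∈ Z, F (φ + ψ) = F φ + F ψ) ∧
          (∀ c : k, ∀ φ ∈ Z, F (c • φ) = c • F φ) ∧
          (∀ φ ∈ Z, ∀ ψ ∈ Z, F (φ * ψ) = F φ * F ψ) ∧
          F 1 = 1) := by
  intro i0 i1 Z
  have hI0 : i0 = ⟨0, by omega⟩ := rfl
  have hI1 : i1 = ⟨1, by omega⟩ := rfl
  set i2 : Fin d := ⟨2, by omega⟩ with hI2
  have h01 : i0 ≠ i1 := by simp [hI0, hI1, Fin.ext_iff]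
  have h02 : i0 ≠ i2 := by simp [hI0, hI2, Fin.ext_iff]
  have h12 : i1 ≠ i2 := by simp [hI1, hI2, Fin.ext_iff]
  have hZdef : ∀ φ : Module.End k V, φ ∈ Z ↔ ∀ v : Fin d → V,
      Θ (update v i0 (φ (v i0))) = Θ (update v i1 (φ (v i1))) := fun φ => Iff.rfl
  -- permutation transport
  have hperm : ∀ (σ : Equiv.Perm (Fin d)) (w : Fin d → V) (a : Fin d) (x : V),
      Θ (update w (σ a) x) = Θ (update (w ∘ σ) a x) := by
    intro σ w a x
    rw [← hsymm σ (update w (σ a) x), update_comp_equiv]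
    simp
  -- a centered operator can be moved between any two distinct slots
  have hmove : ∀ φ ∈ Z, ∀ (i j : Fin d), i ≠ j → ∀ v : Fin d → V,
      Θ (update v i (φ (v i))) = Θ (update v j (φ (v j))) := by
    intro φ hφ i j hij v
    set τ : Equiv.Perm (Fin d) := Equiv.swap i0 i with hτ
    set ρ : Equiv.Perm (Fin d) := Equiv.swap i1 (τ j) with hρ
    set σ : Equiv.Perm (Fin d) := τ * ρ with hσ
    have hτj : τ j ≠ i0 := by
      intro h
      apply hij
      have : τ (τ j) = τ i0 := by rw [h]
      simpa [hτ, Equiv.swap_apply_left] using this.symm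
    have hσ0 : σ i0 = i := by
      have : ρ i0 = i0 := Equiv.swap_apply_of_ne_of_ne h01 (Ne.symm hτj)
      simp [hσ, Equiv.Perm.mul_apply, this, hτ, Equiv.swap_apply_left]
    have hσ1 : σ i1 = j := by
      have : ρ i1 = τ j := Equiv.swap_apply_left _ _
      simp [hσ, Equiv.Perm.mul_apply, this, hτ]
    calc Θ (update v i (φ (v i)))
        = Θ (update v (σ i0) (φ (v (σ i0)))) := by rw [hσ0]
      _ = Θ (update (v ∘ σ) i0 (φ ((v ∘ σ) i0))) := hperm σ v i0 _
      _ = Θ (update (v ∘ σ) i1 (φ ((v ∘ σ) i1))) := hφ (v ∘ σ)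
      _ = Θ (update v (σ i1) (φ (v (σ i1)))) := (hperm σ v i1 _).symm
      _ = Θ (update v j (φ (v j))) := by rw [hσ1]
  -- Z contains 1, 0, and is closed under + and *
  have h1Z : (1 : Module.End k V) ∈ Z := by
    rw [hZdef]
    intro v
    simp [Module.End.one_apply, update_eq_self]
  have h0Z : (0 : Module.End k V) ∈ Z := by
    rw [hZdef]
    intro v
    rw [LinearMap.zero_apply, LinearMap.zero_apply,
      Θ.map_coord_zero i0 (update_self _ _ _), Θ.map_coord_zero i1 (update_self _ _ _)]
  have hZadd : ∀ φ ∈ Z, ∀ ψ ∈ Z, φ + ψ ∈ Z := by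
    intro φ hφ ψ hψ
    rw [hZdef] at *
    intro v
    rw [LinearMap.add_apply, LinearMap.add_apply, MultilinearMap.map_update_add,
      MultilinearMap.map_update_add, hφ v, hψ v]
  have hZmul : ∀ φ ∈ Z, ∀ ψ ∈ Z, φ * ψ ∈ Z := by
    intro φ hφ ψ hψ
    rw [hZdef] at hφ hψ ⊢
    intro v
    set w : Fin d → V := update v i0 (ψ (v i0)) with hw
    set w' : Fin d → V := update v i2 (φ (v i2)) with hw'
    set w'' : Fin d → V := update v i1 (ψ (v i1)) with hw''
    calc Θ (update v i0 ((φ * ψ) (v i0)))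
        = Θ (update w i0 (φ (w i0))) := by
          rw [hw]; rw [update_idem, update_self]; rfl
      _ = Θ (update w i2 (φ (w i2))) := hmove φ hφ i0 i2 h02 w
      _ = Θ (update w' i0 (ψ (w' i0))) := by
          rw [hw, hw', update_of_ne (Ne.symm h02), update_of_ne h02,
            update_comm (Ne.symm h02)]
      _ = Θ (update w' i1 (ψ (w' i1))) := hψ w'
      _ = Θ (update w'' i2 (φ (w'' i2))) := by
          rw [hw', hw'', update_of_ne (Ne.symm h12), update_of_ne h12,
            update_comm h12]
      _ = Θ (update w'' i1 (φ (w'' i1))) := hmove φ hφ i2 i1 (Ne.symm h12) w''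
      _ = Θ (update v i1 ((φ * ψ) (v i1))) := by
          rw [hw'']; rw [update_idem, update_self]; rfl
  constructor
  · -- diagonalizable → center is kⁿ
    rintro ⟨β, hβ⟩
    -- expansion of Θ in the basis
    have hexp : ∀ v : Fin d → V,
        Θ v = ∑ j : Fin d → Fin n, (∏ s, β.repr (v s) (j s)) • Θ (fun s => β (j s)) := by
      intro v
      conv_lhs => rw [show v = fun s => ∑ m : Fin n, β.repr (v s) m • β m from
        funext fun s => (β.sum_repr (v s)).symm]
      rw [MultilinearMap.map_sum]
      exact Finset.sum_congr rfl fun j _ => by rw [MultilinearMap.map_smul_univ]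
    -- the diagonal values are nonzero
    have hc : ∀ i : Fin n, Θ (fun _ => β i) ≠ 0 := by
      intro i hci
      refine β.ne_zero i (hnd (β i) fun v => ?_)
      rw [hexp]
      apply Finset.sum_eq_zero
      intro j _
      by_cases hall : ∀ s s' : Fin d, j s = j s'
      · by_cases hji : j i0 = i
        · have hfun : (fun s => β (j s)) = fun _ => β i := by
            funext s; rw [hall s i0, hji]
          rw [hfun, hci, smul_zero]
        · have hz : β.repr ((update v i0 (β i)) i0) (j i0) = 0 := by
            rw [update_self, β.repr_self]
            exact Finsupp.single_eq_of_ne hji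
          rw [Finset.prod_eq_zero (Finset.mem_univ i0) hz, zero_smul]
      · rw [hβ j hall, smul_zero]
    -- centered operators are diagonal
    have hdiag1 : ∀ φ ∈ Z, ∀ i j : Fin n, i ≠ j → β.repr (φ (β j)) i = 0 := by
      intro φ hφ i j hij
      rw [hZdef] at hφ
      set v : Fin d → V := update (fun _ => β i) i0 (β j) with hv
      have h := hφ v
      have hv0 : v i0 = β j := update_self _ _ _
      have hv1 : v i1 = β i := update_of_ne (Ne.symm h01) _ _
      have hL : Θ (update v i0 (φ (v i0))) = β.repr (φ (β j)) i * Θ (fun _ => β i) := by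
        rw [hv0]
        conv_lhs => rw [show φ (β j) = ∑ m : Fin n, β.repr (φ (β j)) m • β m from
          (β.sum_repr _).symm]
        rw [MultilinearMap.map_update_sum]
        rw [Finset.sum_eq_single i]
        · rw [MultilinearMap.map_update_smul, smul_eq_mul]
          congr 1
          have : update v i0 (β i) = fun _ => β i := by
            rw [hv, update_idem]
            funext s
            by_cases hs : s = i0
            · rw [hs, update_self]
            · rw [update_of_ne hs]
          rw [this]
        · intro m _ hmi
          rw [MultilinearMap.map_update_smul]
          have : update v i0 (β m) = fun s => β ((update (fun _ => i) i0 m) s) := by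
            rw [hv, update_idem]
            funext s
            by_cases hs : s = i0
            · rw [hs, update_self, update_self]
            · rw [update_of_ne hs, update_of_ne hs]
          rw [this, hβ _ (by
            intro hall
            exact hmi (by simpa [update_self, update_of_ne (Ne.symm h01)] using hall i0 i1)),
            smul_zero]
        · intro hiu; exact absurd (Finset.mem_univ i) hiu
      have hR : Θ (update v i1 (φ (v i1))) = 0 := by
        rw [hv1]
        conv_lhs => rw [show φ (β i) = ∑ m : Fin n, β.repr (φ (β i)) m • β m from
          (β.sum_repr _).symm]
        rw [MultilinearMap.map_update_sum]
        apply Finset.sum_eq_zero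
        intro m _
        rw [MultilinearMap.map_update_smul]
        have : update v i1 (β m)
            = fun s => β ((update (update (fun _ => i) i0 j) i1 m) s) := by
          funext s
          by_cases hs : s = i1
          · rw [hs, update_self, update_self]
          · rw [update_of_ne hs, update_of_ne hs, hv]
            by_cases hs0 : s = i0
            · rw [hs0, update_self, update_self]
            · rw [update_of_ne hs0, update_of_ne hs0]
        rw [this, hβ _ (by
          intro hall
          have := hall i0 i2
          rw [update_of_ne h01, update_self, update_of_ne (Ne.symm h12),
            update_of_ne (Ne.symm h02)] at this
          exact hij (by simpa using this.symm)), smul_zero]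
      rw [hL, hR] at h
      exact (mul_eq_zero.mp h).resolve_right (hc i)
    -- diagonal operators are centered
    have hdiag2 : ∀ (lam : Fin n → k) (φ : Module.End k V),
        (∀ m, φ (β m) = lam m • β m) → φ ∈ Z := by
      intro lam φ hφ
      rw [hZdef]
      intro v
      have key : ∀ i : Fin d, Θ (update v i (φ (v i)))
          = ∑ j : Fin d → Fin n,
              (∏ s, β.repr (v s) (j s)) • (lam (j i) • Θ (fun s => β (j s))) := by
        intro i
        have hupd : update v i (φ (v i)) = fun s => ∑ m : Fin n,
            β.repr (v s) m • (if s = i then lam m • β m else β m) := by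
          funext s
          by_cases hs : s = i
          · subst hs
            rw [update_self]
            simp only [if_pos rfl]
            conv_lhs => rw [show v s = ∑ m : Fin n, β.repr (v s) m • β m from
              (β.sum_repr _).symm]
            rw [map_sum]
            exact Finset.sum_congr rfl fun m _ => by rw [map_smul, hφ]; simp
          · rw [update_of_ne hs]
            simp only [if_neg hs]
            exact (β.sum_repr _).symm
        rw [hupd, MultilinearMap.map_sum]
        refine Finset.sum_congr rfl fun j _ => ?_
        rw [MultilinearMap.map_smul_univ]
        congr 1
        have : (fun s => if s = i then lam (j s) • β (j s) else β (j s))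
            = update (fun s => β (j s)) i (lam (j i) • β (j i)) := by
          funext s
          by_cases hs : s = i
          · subst hs; rw [update_self, if_pos rfl]
          · rw [update_of_ne hs, if_neg hs]
        rw [this, MultilinearMap.map_update_smul, update_eq_self]
      rw [key, key]
      refine Finset.sum_congr rfl fun j _ => ?_
      by_cases hall : ∀ s s' : Fin d, j s = j s'
      · rw [hall i1 i0]
      · rw [hβ j hall, smul_zero, smul_zero, smul_zero, smul_zero]
    -- the isomorphism
    refine ⟨fun φ i => β.repr (φ (β i)) i, ⟨?_, ?_, ?_⟩, ?_, ?_, ?_, ?_⟩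
    · exact fun φ _ => Set.mem_univ _
    · -- injective on Z
      intro φ hφ ψ hψ h
      refine β.ext fun m => ?_
      have hφm : φ (β m) = β.repr (φ (β m)) m • β m := by
        conv_lhs => rw [← β.sum_repr (φ (β m))]
        rw [Finset.sum_eq_single m]
        · intro b _ hbm
          rw [hdiag1 φ hφ b m hbm, zero_smul]
        · intro hm; exact absurd (Finset.mem_univ m) hm
      have hψm : ψ (β m) = β.repr (ψ (β m)) m • β m := by
        conv_lhs => rw [← β.sum_repr (ψ (β m))]
        rw [Finset.sum_eq_single m]
        · intro b _ hbm
          rw [hdiag1 ψ hψ b m hbm, zero_smul]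
        · intro hm; exact absurd (Finset.mem_univ m) hm
      have hm : β.repr (φ (β m)) m = β.repr (ψ (β m)) m := congrFun h m
      rw [hφm, hψm, hm]
    · -- surjective onto univ
      intro lam _
      refine ⟨(β.constr k) (fun m => lam m • β m),
        hdiag2 lam _ (fun m => β.constr_basis k _ m), funext fun m => ?_⟩
      show β.repr (((β.constr k) fun m => lam m • β m) (β m)) m = lam m
      rw [β.constr_basis k _ m]
      simp [β.repr_self]
    · -- additive
      intro φ _ ψ _
      funext m
      simp [LinearMap.add_apply]
    · -- scalar multiplication
      intro c φ _
      funext m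
      simp [LinearMap.smul_apply]
    · -- multiplicative
      intro φ hφ ψ hψ
      funext m
      have hψm : ψ (β m) = β.repr (ψ (β m)) m • β m := by
        conv_lhs => rw [← β.sum_repr (ψ (β m))]
        rw [Finset.sum_eq_single m]
        · intro b _ hbm
          rw [hdiag1 ψ hψ b m hbm, zero_smul]
        · intro hm; exact absurd (Finset.mem_univ m) hm
      show β.repr ((φ * ψ) (β m)) m = β.repr (φ (β m)) m * β.repr (ψ (β m)) m
      rw [Module.End.mul_apply, hψm, map_smul, map_smul]
      simp [mul_comm]
    · -- unital
      funext m
      show β.repr ((1 : Module.End k V) (β m)) m = 1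
      rw [Module.End.one_apply]
      simp [β.repr_self]
  · -- center is kⁿ → diagonalizable
    rintro ⟨F, hbij, hadd, hsmul, hmul, hone⟩
    by_cases hn0 : n = 0
    · subst hn0
      have hsub : Subsingleton V := Module.finrank_zero_iff.mp hn
      refine ⟨Module.Basis.empty V, fun j _ => ?_⟩
      exact (j i0).elim0
    · have hF0 : F 0 = 0 := by
        have h := hadd 0 h0Z 0 h0Z
        rw [add_zero] at h
        exact (add_eq_left.mp h.symm)
      have he : ∀ i : Fin n, ∃ φ ∈ Z, F φ = Pi.single i 1 := by
        intro i
        rcases hbij.surjOn (Set.mem_univ (Pi.single i 1)) with ⟨φ, hφ, hF⟩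
        exact ⟨φ, hφ, hF⟩
      choose e heZ heF using he
      have horth : ∀ i j : Fin n, i ≠ j → e i * e j = 0 := by
        intro i j hij
        refine hbij.injOn (hZmul _ (heZ i) _ (heZ j)) h0Z ?_
        rw [hmul _ (heZ i) _ (heZ j), heF, heF, hF0]
        funext m
        simp only [Pi.mul_apply, Pi.single_apply, Pi.zero_apply]
        by_cases him : m = i
        · by_cases hjm : m = j
          · exact absurd (him.symm.trans hjm) hij
          · rw [if_neg hjm, mul_zero]
        · rw [if_neg him, zero_mul]
      have hidem : ∀ i : Fin n, e i * e i = e i := by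
        intro i
        refine hbij.injOn (hZmul _ (heZ i) _ (heZ i)) (heZ i) ?_
        rw [hmul _ (heZ i) _ (heZ i), heF]
        funext m
        simp only [Pi.mul_apply, Pi.single_apply]
        by_cases him : m = i
        · rw [if_pos him, mul_one]
        · rw [if_neg him, mul_zero]
      have hene : ∀ i : Fin n, e i ≠ 0 := by
        intro i h
        have := heF i
        rw [h, hF0] at this
        have h2 := congrFun this i
        rw [Pi.single_eq_same, Pi.zero_apply] at h2
        exact one_ne_zero h2.symm
      have hex : ∀ i : Fin n, ∃ x : V, e i x ≠ 0 := by
        intro i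
        by_contra h
        push_neg at h
        exact hene i (LinearMap.ext fun x => h x)
      choose x hx using hex
      set b : Fin n → V := fun i => e i (x i) with hb
      have heb : ∀ i j : Fin n, i ≠ j → e i (b j) = 0 := by
        intro i j hij
        have : e i (e j (x j)) = (e i * e j) (x j) := rfl
        rw [hb]
        simp only []
        rw [this, horth i j hij, LinearMap.zero_apply]
      have hebi : ∀ i : Fin n, e i (b i) = b i := by
        intro i
        have : e i (e i (x i)) = (e i * e i) (x i) := rfl
        rw [hb]
        simp only []
        rw [this, hidem i]
      have hli : LinearIndependent k b := by
        rw [Fintype.linearIndependent_iff]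
        intro g hg j
        have h1 : e j (∑ i : Fin n, g i • b i) = g j • b j := by
          rw [map_sum]
          rw [Finset.sum_eq_single j]
          · rw [map_smul, hebi j]
          · intro i _ hij
            rw [map_smul, heb j i (Ne.symm hij), smul_zero]
          · intro hj; exact absurd (Finset.mem_univ j) hj
        rw [hg, map_zero] at h1
        rcases smul_eq_zero.mp h1.symm with h | h
        · exact h
        · exact absurd h (hx j)
      haveI : Nonempty (Fin n) := ⟨⟨0, Nat.pos_of_ne_zero hn0⟩⟩
      refine ⟨basisOfLinearIndependentOfCardEqFinrank hli (by simp [hn]), ?_⟩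
      intro j hj
      rw [coe_basisOfLinearIndependentOfCardEqFinrank]
      push_neg at hj
      obtain ⟨s, s', hss⟩ := hj
      have hsne : s ≠ s' := fun h => hss (h ▸ rfl)
      set w : Fin d → V := fun t => b (j t) with hw
      have h1 : update w s (e (j s) (w s)) = w := by
        rw [show e (j s) (w s) = w s from hebi (j s), update_eq_self]
      calc Θ w = Θ (update w s (e (j s) (w s))) := by rw [h1]
        _ = Θ (update w s' (e (j s) (w s'))) := hmove (e (j s)) (heZ (j s)) s s' hsne w
        _ = 0 := by
            rw [show e (j s) (w s') = 0 from heb (j s) (j s') hss]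
            exact Θ.map_coord_zero s' (update_self _ _ _)
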